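/- Let σ be a derangement of {1,…,r} (σ(i) ≠ i for all i) and let s = #{i : σ(i) < i}. Then ht(σ) = Σ_{i=1}^r |σ(i) − i| ≤ 2s(r − s). -/

import Mathlib

open scoped BigOperators

namespace PermStats

/-- The number of drops `c_<(σ) = #{i : σ(i) < i}` of a permutation of `Fin r`. -/
def drops {r : ℕ} (σ : Equiv.Perm (Fin r)) : ℕ :=
  (Finset.univ.filter fun i => σ i < i).card

/-- The number of jumps `c_>(σ) = #{i : σ(i) > i}` of a permutation of `Fin r`. -/
def jumps {r : ℕ} (σ : Equiv.Perm (Fin r)) : ℕ :=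
  (Finset.univ.filter fun i => i < σ i).card

/-- The height `ht(σ) = ∑_i |σ(i) - i|` of a permutation of `Fin r`. -/
def ht {r : ℕ} (σ : Equiv.Perm (Fin r)) : ℕ :=
  ∑ i : Fin r, Nat.dist ((σ i : ℕ)) (i : ℕ)

/-- number of "up-crossings" at level `k`. -/
def Bsum {r : ℕ} (σ : Equiv.Perm (Fin r)) (k : ℕ) : ℕ :=
  ∑ i : Fin r, if (i : ℕ) ≤ k ∧ k < (σ i : ℕ) then 1 else 0

/-- number of "down-crossings" at level `k`. -/
def Bsum' {r : ℕ} (σ : Equiv.Perm (Fin r)) (k : ℕ) : ℕ :=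
  ∑ i : Fin r, if (σ i : ℕ) ≤ k ∧ k < (i : ℕ) then 1 else 0

lemma sum_range_aux (r m : ℕ) (h : 2 * m ≤ r) :
    ∑ j ∈ Finset.range m, (r - 1 - 2 * j) = m * (r - m) := by
  induction m with
  | zero => simp
  | succ m ih =>
      rw [Finset.sum_range_succ, ih (by omega)]
      obtain ⟨d, rfl⟩ : ∃ d, r = 2 * m + 2 + d := ⟨r - (2 * m + 2), by omega⟩
      have e1 : 2 * m + 2 + d - m = m + 2 + d := by omega
      have e2 : 2 * m + 2 + d - 1 - 2 * m = d + 1 := by omega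
      have e3 : 2 * m + 2 + d - (m + 1) = m + 1 + d := by omega
      rw [e1, e2, e3]; ring

lemma min_eq_card (m k r : ℕ) :
    min m (min (k + 1) (r - (k + 1)))
      = ∑ j ∈ Finset.range m, (if j ≤ k ∧ k + j + 2 ≤ r then 1 else 0) := by
  rw [← Finset.card_filter]
  have h : (Finset.range m).filter (fun j => j ≤ k ∧ k + j + 2 ≤ r)
      = Finset.range (min m (min (k + 1) (r - (k + 1)))) := by
    ext j; simp only [Finset.mem_filter, Finset.mem_range]; omega
  rw [h, Finset.card_range]

lemma key_sum (r m : ℕ) (h : 2 * m ≤ r) :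
    ∑ k ∈ Finset.range r, min m (min (k + 1) (r - (k + 1))) ≤ m * (r - m) := by
  calc ∑ k ∈ Finset.range r, min m (min (k + 1) (r - (k + 1)))
      = ∑ k ∈ Finset.range r, ∑ j ∈ Finset.range m,
          (if j ≤ k ∧ k + j + 2 ≤ r then 1 else 0) :=
        Finset.sum_congr rfl fun k _ => min_eq_card m k r
    _ = ∑ j ∈ Finset.range m, ∑ k ∈ Finset.range r,
          (if j ≤ k ∧ k + j + 2 ≤ r then 1 else 0) := Finset.sum_comm
    _ = ∑ j ∈ Finset.range m, (r - 1 - 2 * j) := by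
        refine Finset.sum_congr rfl fun j hj => ?_
        rw [← Finset.card_filter]
        have h2 : (Finset.range r).filter (fun k => j ≤ k ∧ k + j + 2 ≤ r)
            = Finset.Ico j (r - 1 - j) := by
          ext k; simp only [Finset.mem_filter, Finset.mem_range, Finset.mem_Ico]; omega
        rw [h2, Nat.card_Ico]; omega
    _ ≤ m * (r - m) := (sum_range_aux r m h).le

lemma dist_eq_sum {r : ℕ} (a b : ℕ) (ha : a ≤ r) (hb : b ≤ r) :
    Nat.dist a b = ∑ k ∈ Finset.range r,
      ((if a ≤ k ∧ k < b then 1 else 0) + (if b ≤ k ∧ k < a then 1 else 0)) := by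
  rw [Finset.sum_add_distrib, ← Finset.card_filter, ← Finset.card_filter]
  have h1 : (Finset.range r).filter (fun k => a ≤ k ∧ k < b) = Finset.Ico a b := by
    ext k; simp only [Finset.mem_filter, Finset.mem_range, Finset.mem_Ico]; omega
  have h2 : (Finset.range r).filter (fun k => b ≤ k ∧ k < a) = Finset.Ico b a := by
    ext k; simp only [Finset.mem_filter, Finset.mem_range, Finset.mem_Ico]; omega
  rw [h1, h2, Nat.card_Ico, Nat.card_Ico]
  simp only [Nat.dist]
  omega

lemma ht_eq_sum {r : ℕ} (σ : Equiv.Perm (Fin r)) :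
    ht σ = ∑ k ∈ Finset.range r, (Bsum σ k + Bsum' σ k) := by
  have h : ∀ i : Fin r, Nat.dist ((σ i : ℕ)) (i : ℕ)
      = ∑ k ∈ Finset.range r,
        ((if (i : ℕ) ≤ k ∧ k < (σ i : ℕ) then 1 else 0)
          + (if (σ i : ℕ) ≤ k ∧ k < (i : ℕ) then 1 else 0)) := by
    intro i
    rw [dist_eq_sum (σ i : ℕ) (i : ℕ) (le_of_lt (σ i).isLt) (le_of_lt i.isLt)]
    exact Finset.sum_congr rfl fun k _ => add_comm _ _
  rw [ht, Finset.sum_congr rfl fun i _ => h i, Finset.sum_comm]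
  exact Finset.sum_congr rfl fun k _ => by
    rw [Finset.sum_add_distrib]; rfl

lemma count_le_level (r k : ℕ) :
    (∑ i : Fin r, if (i : ℕ) ≤ k then (1 : ℕ) else 0) = min (k + 1) r := by
  rw [Fin.sum_univ_eq_sum_range (fun n => if n ≤ k then (1 : ℕ) else 0) r,
    ← Finset.card_filter]
  have h : (Finset.range r).filter (fun n => n ≤ k) = Finset.range (min (k + 1) r) := by
    ext n; simp only [Finset.mem_filter, Finset.mem_range]; omega
  rw [h, Finset.card_range]

lemma count_gt_level (r k : ℕ) :
    (∑ i : Fin r, if k < (i : ℕ) then (1 : ℕ) else 0) = r - min (k + 1) r := by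
  rw [Fin.sum_univ_eq_sum_range (fun n => if k < n then (1 : ℕ) else 0) r,
    ← Finset.card_filter]
  have h : (Finset.range r).filter (fun n => k < n) = Finset.Ico (min (k + 1) r) r := by
    ext n; simp only [Finset.mem_filter, Finset.mem_range, Finset.mem_Ico]; omega
  rw [h, Nat.card_Ico]

lemma bsum_eq_bsum' {r : ℕ} (σ : Equiv.Perm (Fin r)) (k : ℕ) :
    Bsum σ k = Bsum' σ k := by
  have h1 : ∑ i : Fin r, (if (σ i : ℕ) ≤ k then (1 : ℕ) else 0)
      = ∑ i : Fin r, (if (i : ℕ) ≤ k then (1 : ℕ) else 0) :=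
    Equiv.sum_comp σ (fun i => if (i : ℕ) ≤ k then (1 : ℕ) else 0)
  have h2 : ∀ i : Fin r,
      (if (i : ℕ) ≤ k then (1 : ℕ) else 0) + (if (σ i : ℕ) ≤ k ∧ k < (i : ℕ) then 1 else 0)
        = (if (σ i : ℕ) ≤ k then 1 else 0) + (if (i : ℕ) ≤ k ∧ k < (σ i : ℕ) then 1 else 0) := by
    intro i; split_ifs <;> omega
  have h3 : (∑ i : Fin r, (if (i : ℕ) ≤ k then (1 : ℕ) else 0)) + Bsum' σ k
      = (∑ i : Fin r, (if (σ i : ℕ) ≤ k then (1 : ℕ) else 0)) + Bsum σ k := by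
    rw [Bsum, Bsum', ← Finset.sum_add_distrib, ← Finset.sum_add_distrib]
    exact Finset.sum_congr rfl fun i _ => h2 i
  rw [h1] at h3
  omega

lemma drops_add_jumps {r : ℕ} (σ : Equiv.Perm (Fin r)) (hσ : ∀ i, σ i ≠ i) :
    drops σ + jumps σ = r := by
  rw [drops, jumps, Finset.card_filter, Finset.card_filter, ← Finset.sum_add_distrib]
  have h : ∀ i : Fin r,
      ((if σ i < i then 1 else 0) + (if i < σ i then 1 else 0) : ℕ) = 1 := by
    intro i
    rcases (hσ i).lt_or_gt with h | h
    · simp [h, asymm h]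
    · simp [h, asymm h]
  rw [Finset.sum_congr rfl fun i _ => h i]
  simp

lemma bsum_le_jumps {r : ℕ} (σ : Equiv.Perm (Fin r)) (k : ℕ) :
    Bsum σ k ≤ jumps σ := by
  rw [Bsum, jumps, Finset.card_filter]
  refine Finset.sum_le_sum fun i _ => ?_
  by_cases h : (i : ℕ) ≤ k ∧ k < (σ i : ℕ)
  · simp [h, show i < σ i from Fin.lt_def.mpr (by omega)]
  · simp [h]

lemma bsum'_le_drops {r : ℕ} (σ : Equiv.Perm (Fin r)) (k : ℕ) :
    Bsum' σ k ≤ drops σ := by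
  rw [Bsum', drops, Finset.card_filter]
  refine Finset.sum_le_sum fun i _ => ?_
  by_cases h : (σ i : ℕ) ≤ k ∧ k < (i : ℕ)
  · simp [h, show σ i < i from Fin.lt_def.mpr (by omega)]
  · simp [h]

lemma bsum_le_level {r : ℕ} (σ : Equiv.Perm (Fin r)) (k : ℕ) :
    Bsum σ k ≤ min (k + 1) r := by
  rw [← count_le_level r k, Bsum]
  refine Finset.sum_le_sum fun i _ => ?_
  split_ifs <;> omega

lemma bsum'_le_level {r : ℕ} (σ : Equiv.Perm (Fin r)) (k : ℕ) :
    Bsum' σ k ≤ r - min (k + 1) r := by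
  rw [← count_gt_level r k, Bsum']
  refine Finset.sum_le_sum fun i _ => ?_
  split_ifs <;> omega

/-- If `σ` is a derangement of `{1,…,r}` and `s = c_<(σ)` is its number
of drops, then `ht(σ) ≤ 2s(r - s)`. -/
theorem ht_le_of_derangement (r : ℕ) (σ : Equiv.Perm (Fin r)) (hσ : ∀ i, σ i ≠ i) :
    ht σ ≤ 2 * drops σ * (r - drops σ) := by
  have hdj : drops σ + jumps σ = r := drops_add_jumps σ hσ
  have hm : 2 * min (drops σ) (jumps σ) ≤ r := by omega
  have hbound : ∀ k ∈ Finset.range r, Bsum σ k + Bsum' σ k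
      ≤ 2 * min (min (drops σ) (jumps σ)) (min (k + 1) (r - (k + 1))) := by
    intro k hk
    have hk' : k < r := Finset.mem_range.mp hk
    have hb := bsum_eq_bsum' σ k
    have h1 := bsum_le_jumps σ k
    have h2 := bsum'_le_drops σ k
    have h3 := bsum_le_level σ k
    have h4 := bsum'_le_level σ k
    omega
  have hfin : min (drops σ) (jumps σ) * (r - min (drops σ) (jumps σ))
      = drops σ * (r - drops σ) := by
    rcases Nat.le_total (drops σ) (jumps σ) with h | h
    · rw [min_eq_left h]
    · rw [min_eq_right h]
      have e1 : jumps σ = r - drops σ := by omega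
      rw [e1]
      have e3 : r - (r - drops σ) = drops σ := by omega
      rw [e3, mul_comm]
  calc ht σ = ∑ k ∈ Finset.range r, (Bsum σ k + Bsum' σ k) := ht_eq_sum σ
    _ ≤ ∑ k ∈ Finset.range r,
          2 * min (min (drops σ) (jumps σ)) (min (k + 1) (r - (k + 1))) :=
        Finset.sum_le_sum hbound
    _ = 2 * ∑ k ∈ Finset.range r,
          min (min (drops σ) (jumps σ)) (min (k + 1) (r - (k + 1))) := by
        rw [Finset.mul_sum]
    _ ≤ 2 * (min (drops σ) (jumps σ) * (r - min (drops σ) (jumps σ))) :=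
        Nat.mul_le_mul_left 2 (key_sum r (min (drops σ) (jumps σ)) hm)
    _ = 2 * drops σ * (r - drops σ) := by rw [hfin, mul_assoc]

end PermStats
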